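/- Let f:ℕ→ℕ be defined by f(n)=⌊φn⌋+1 if n∈A and f(n)=⌊(φ−1)n⌋ if n∈B, and let j:ℕ→ℕ be defined by j(n)=⌊φn⌋−1 if n∈R_{1,0}, j(n)=⌊(φ−1)n⌋+1 if n∈R_{1,1}, and j(n)=⌊φn⌋+1 if n∈R_{2,0}. Then f∘j = j⁻¹∘f; equivalently, j(f(j(n))) = f(n) for all n∈ℕ. (Consequently, the group of permutations of ℕ generated by f and j is an infinite dihedral group.) -/

import Mathlib

/-- The golden ratio φ = (1 + √5)/2. -/
noncomputable def phi : ℝ := (1 + Real.sqrt 5) / 2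

/-- The lower Wythoff sequence a(n) = ⌊nφ⌋. -/
noncomputable def wa (n : ℕ) : ℕ := ⌊(n : ℝ) * phi⌋₊

/-- The upper Wythoff sequence b(n) = ⌊nφ²⌋. -/
noncomputable def wb (n : ℕ) : ℕ := ⌊(n : ℝ) * phi ^ 2⌋₊

/-- A = range of the lower Wythoff sequence. -/
def WA : Set ℕ := {m | ∃ n : ℕ, 0 < n ∧ wa n = m}

/-- B = range of the upper Wythoff sequence. -/
def WB : Set ℕ := {m | ∃ n : ℕ, 0 < n ∧ wb n = m}

/-- f_{i,j}(n) = F(i+1)·a(n) + F(i)·n − j. -/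
noncomputable def fij (i : ℕ) (j : ℤ) (n : ℕ) : ℤ :=
  (Nat.fib (i + 1) : ℤ) * wa n + (Nat.fib i : ℤ) * n - j

/-- R_{i,j} = { f_{i,j}(n) : n ∈ ℕ, n ≥ 1 }. -/
def R (i : ℕ) (j : ℤ) : Set ℤ := {m | ∃ n : ℕ, 0 < n ∧ fij i j n = m}

open scoped Classical in
/-- f(n) = ⌊φn⌋+1 if n ∈ A, and f(n) = ⌊(φ−1)n⌋ if n ∈ B. -/
noncomputable def f (n : ℕ) : ℕ :=
  if n ∈ WA then wa n + 1 else ⌊(phi - 1) * (n : ℝ)⌋₊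

open scoped Classical in
/-- j(n) = ⌊φn⌋−1 if n ∈ R_{1,0}, ⌊(φ−1)n⌋+1 if n ∈ R_{1,1}, ⌊φn⌋+1 if n ∈ R_{2,0}. -/
noncomputable def jmap (n : ℕ) : ℕ :=
  if (n : ℤ) ∈ R 1 0 then wa n - 1
  else if (n : ℤ) ∈ R 1 1 then ⌊(phi - 1) * (n : ℝ)⌋₊ + 1
  else wa n + 1

section Aux

lemma hs5 : Real.sqrt 5 ^ 2 = 5 := Real.sq_sqrt (by norm_num)

lemma phi_sq : phi ^ 2 = phi + 1 := by
  have h := hs5; unfold phi; linear_combination h / 4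

lemma phi_lb : 1.6 < phi := by
  have h := hs5; have h0 := Real.sqrt_nonneg 5
  unfold phi; nlinarith

lemma phi_ub : phi < 1.62 := by
  have h := hs5; have h0 := Real.sqrt_nonneg 5
  unfold phi; nlinarith

lemma mul_phi_ne_int (m : ℕ) (hm : m ≠ 0) (k : ℤ) : (m : ℝ) * phi ≠ (k : ℝ) := by
  intro h
  have h5 : Irrational (Real.sqrt 5) := (by norm_num : Nat.Prime 5).irrational_sqrt
  have hm' : (m : ℝ) ≠ 0 := Nat.cast_ne_zero.mpr hm
  apply (irrational_iff_ne_rational _).mp h5 (2 * k - m) m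
  · exact_mod_cast hm
  unfold phi at h
  rw [eq_div_iff (by exact_mod_cast hm')]
  push_cast
  nlinarith [h]

lemma fract_rep {x r : ℝ} (k : ℤ) (h0 : 0 ≤ r) (h1 : r < 1) (h : x = (k : ℝ) + r) :
    Int.fract x = r := by
  rw [Int.fract_eq_iff]
  exact ⟨h0, h1, k, by rw [h]; ring⟩

lemma fract_pos (m : ℕ) (hm : 0 < m) : 0 < Int.fract ((m : ℝ) * phi) := by
  rcases (Int.fract_nonneg ((m : ℝ) * phi)).lt_or_eq with h | h
  · exact h
  · exfalso
    apply mul_phi_ne_int m (by omega) ⌊(m : ℝ) * phi⌋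
    have := Int.self_sub_fract ((m : ℝ) * phi)
    rw [← h] at this
    linarith

lemma fract_ne1 (m : ℕ) : Int.fract ((m : ℝ) * phi) ≠ 2 - phi := by
  intro h
  apply mul_phi_ne_int (m + 1) (by omega) (⌊(m : ℝ) * phi⌋ + 2)
  have h2 := Int.self_sub_fract ((m : ℝ) * phi)
  rw [h] at h2
  push_cast
  linarith

lemma fract_ne2 (m : ℕ) : Int.fract ((m : ℝ) * phi) ≠ 4 - 2 * phi := by
  intro h
  apply mul_phi_ne_int (m + 2) (by omega) (⌊(m : ℝ) * phi⌋ + 4)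
  have h2 := Int.self_sub_fract ((m : ℝ) * phi)
  rw [h] at h2
  push_cast
  linarith

lemma wa_cast (m : ℕ) : (wa m : ℝ) = (m : ℝ) * phi - Int.fract ((m : ℝ) * phi) := by
  have h0 : (0 : ℝ) ≤ (m : ℝ) * phi := by
    have := phi_lb
    positivity
  unfold wa
  rw [natCast_floor_eq_intCast_floor h0]
  rw [← Int.self_sub_fract]

lemma fb_cast (m : ℕ) : ((⌊(phi - 1) * (m : ℝ)⌋₊ : ℕ) : ℝ)
    = (m : ℝ) * phi - (m : ℝ) - Int.fract ((m : ℝ) * phi) := by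
  have h0 : (0 : ℝ) ≤ (phi - 1) * (m : ℝ) := by
    have := phi_lb
    have : (0:ℝ) ≤ (m:ℝ) := Nat.cast_nonneg m
    nlinarith [phi_lb]
  rw [natCast_floor_eq_intCast_floor h0]
  have he : (phi - 1) * (m : ℝ) = (m : ℝ) * phi - ((m : ℤ) : ℝ) := by push_cast; ring
  rw [he, Int.floor_sub_intCast]
  have := Int.self_sub_fract ((m : ℝ) * phi)
  push_cast
  linarith

lemma memB_iff (m : ℕ) (hm : 0 < m) :
    (∃ k : ℕ, 0 < k ∧ wa k + k = m) ↔ Int.fract ((m : ℝ) * phi) < 2 - phi := by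
  have hsq := phi_sq
  have hlb := phi_lb
  have hub := phi_ub
  constructor
  · rintro ⟨k, hk, he⟩
    have hv0 : 0 < Int.fract ((k : ℝ) * phi) := fract_pos k hk
    have hv1 : Int.fract ((k : ℝ) * phi) < 1 := Int.fract_lt_one _
    set v := Int.fract ((k : ℝ) * phi) with hv_def
    have hwk : (wa k : ℝ) = (k : ℝ) * phi - v := wa_cast k
    have hmr : (m : ℝ) = (k : ℝ) * phi - v + k := by
      have : ((wa k + k : ℕ) : ℝ) = (m : ℝ) := by exact_mod_cast congrArg (Nat.cast : ℕ → ℝ) he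
      push_cast at this
      linarith [hwk, this]
    have hf : Int.fract ((m : ℝ) * phi) = v * (2 - phi) := by
      apply fract_rep ((m : ℤ) + (wa k : ℤ)) (by nlinarith) (by nlinarith)
      push_cast
      rw [hmr, hwk]
      linear_combination (k : ℝ) * hsq
    rw [hf]
    nlinarith
  · intro h
    have hu0 : 0 < Int.fract ((m : ℝ) * phi) := fract_pos m hm
    set u := Int.fract ((m : ℝ) * phi) with hu_def
    have hwm : (wa m : ℝ) = (m : ℝ) * phi - u := wa_cast m
    have hm1 : (1 : ℝ) ≤ (m : ℝ) := by exact_mod_cast hm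
    have hlt : wa m < 2 * m := by
      have : ((wa m : ℕ) : ℝ) < ((2 * m : ℕ) : ℝ) := by push_cast; nlinarith
      exact_mod_cast this
    refine ⟨2 * m - wa m, by omega, ?_⟩
    have hkr : ((2 * m - wa m : ℕ) : ℝ) = 2 * (m : ℝ) - (wa m : ℝ) := by
      rw [Nat.cast_sub (le_of_lt hlt)]; push_cast; ring
    set k := 2 * m - wa m with hk_def
    have hfk : Int.fract ((k : ℝ) * phi) = u * (1 + phi) := by
      apply fract_rep ((wa m : ℤ) - (m : ℤ)) (by nlinarith) (by nlinarith)
      push_cast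
      rw [hkr, hwm]
      linear_combination (-(m : ℝ)) * hsq
    have : (wa k : ℝ) + (k : ℝ) = (m : ℝ) := by
      rw [wa_cast k, hfk, hkr, hwm]
      linear_combination (-(m : ℝ)) * hsq
    exact_mod_cast this

lemma memWA_iff (m : ℕ) (hm : 0 < m) :
    m ∈ WA ↔ 2 - phi < Int.fract ((m : ℝ) * phi) := by
  have hsq := phi_sq
  have hlb := phi_lb
  have hub := phi_ub
  constructor
  · rintro ⟨k, hk, he⟩
    have hv0 : 0 < Int.fract ((k : ℝ) * phi) := fract_pos k hk
    have hv1 : Int.fract ((k : ℝ) * phi) < 1 := Int.fract_lt_one _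
    set v := Int.fract ((k : ℝ) * phi) with hv_def
    have hwk : (wa k : ℝ) = (k : ℝ) * phi - v := wa_cast k
    have hmr : (m : ℝ) = (k : ℝ) * phi - v := by
      rw [← hwk]; exact_mod_cast he.symm
    have hf : Int.fract ((m : ℝ) * phi) = 1 - v * (phi - 1) := by
      apply fract_rep ((m : ℤ) + (k : ℤ) - 1) (by nlinarith) (by nlinarith)
      push_cast
      rw [hmr]
      linear_combination (k : ℝ) * hsq
    rw [hf]
    nlinarith
  · intro h
    have hu0 : 0 < Int.fract ((m : ℝ) * phi) := fract_pos m hm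
    have hu1 : Int.fract ((m : ℝ) * phi) < 1 := Int.fract_lt_one _
    set u := Int.fract ((m : ℝ) * phi) with hu_def
    have hwm : (wa m : ℝ) = (m : ℝ) * phi - u := wa_cast m
    have hm1 : (1 : ℝ) ≤ (m : ℝ) := by exact_mod_cast hm
    have hge : m ≤ wa m := Nat.le_floor (by nlinarith)
    refine ⟨wa m - m + 1, by omega, ?_⟩
    have hkr : ((wa m - m + 1 : ℕ) : ℝ) = (wa m : ℝ) - (m : ℝ) + 1 := by
      rw [Nat.cast_add, Nat.cast_sub hge]; push_cast; ring
    set k := wa m - m + 1 with hk_def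
    have hfk : Int.fract ((k : ℝ) * phi) = phi * (1 - u) := by
      apply fract_rep (m : ℤ) (by nlinarith) (by nlinarith)
      rw [hkr, hwm]
      push_cast
      linear_combination (m : ℝ) * hsq
    have : (wa k : ℝ) = (m : ℝ) := by
      rw [wa_cast k, hfk, hkr, hwm]
      linear_combination (m : ℝ) * hsq
    exact_mod_cast this

lemma R10_iff (m : ℕ) (hm : 0 < m) :
    ((m : ℤ) ∈ R 1 0) ↔ Int.fract ((m : ℝ) * phi) < 2 - phi := by
  rw [← memB_iff m hm]
  constructor
  · rintro ⟨k, hk, he⟩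
    refine ⟨k, hk, ?_⟩
    norm_num [fij, Nat.fib_one, Nat.fib_two] at he
    have : ((wa k + k : ℕ) : ℤ) = ((m : ℕ) : ℤ) := by push_cast; linarith
    exact_mod_cast this
  · rintro ⟨k, hk, he⟩
    refine ⟨k, hk, ?_⟩
    have h2 : ((wa k + k : ℕ) : ℤ) = ((m : ℕ) : ℤ) := by exact_mod_cast he
    norm_num [fij, Nat.fib_one, Nat.fib_two]
    push_cast at h2
    linarith

lemma R11_iff (m : ℕ) :
    ((m : ℤ) ∈ R 1 1) ↔ Int.fract (((m : ℝ) + 1) * phi) < 2 - phi := by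
  have h1 : ((m : ℝ) + 1) = ((m + 1 : ℕ) : ℝ) := by push_cast; ring
  rw [h1, ← memB_iff (m + 1) (by omega)]
  constructor
  · rintro ⟨k, hk, he⟩
    refine ⟨k, hk, ?_⟩
    norm_num [fij, Nat.fib_one, Nat.fib_two] at he
    have : ((wa k + k : ℕ) : ℤ) = ((m + 1 : ℕ) : ℤ) := by push_cast; linarith
    exact_mod_cast this
  · rintro ⟨k, hk, he⟩
    refine ⟨k, hk, ?_⟩
    have h2 : ((wa k + k : ℕ) : ℤ) = ((m + 1 : ℕ) : ℤ) := by exact_mod_cast he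
    norm_num [fij, Nat.fib_one, Nat.fib_two]
    push_cast at h2
    linarith

end Aux

set_option maxHeartbeats 1000000 in
/-- f ∘ j = j⁻¹ ∘ f, equivalently j(f(j(n))) = f(n) for every n ∈ ℕ. -/
theorem stmt_14 : ∀ n : ℕ, 0 < n → jmap (f (jmap n)) = f n := by
  have hsq := phi_sq
  have hlb := phi_lb
  have hub := phi_ub
  intro n hn
  have hu0 : 0 < Int.fract ((n : ℝ) * phi) := fract_pos n hn
  have hu1 : Int.fract ((n : ℝ) * phi) < 1 := Int.fract_lt_one _
  have hne1 : Int.fract ((n : ℝ) * phi) ≠ 2 - phi := fract_ne1 n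
  have hne2 : Int.fract ((n : ℝ) * phi) ≠ 4 - 2 * phi := fract_ne2 n
  set u := Int.fract ((n : ℝ) * phi) with hu_def
  have hwan : (wa n : ℝ) = (n : ℝ) * phi - u := wa_cast n
  have hn1 : (1 : ℝ) ≤ (n : ℝ) := by exact_mod_cast hn
  rcases lt_or_gt_of_ne hne1 with hA | hA
  · -- Case 1 : u < 2 - phi
    have hne_one : n ≠ 1 := by
      rintro rfl
      have h1 : u = phi - 1 := by
        rw [hu_def]
        apply fract_rep 1 (by linarith) (by linarith)
        push_cast; ring
      rw [h1] at hA; linarith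
    have hn2 : (2 : ℝ) ≤ (n : ℝ) := by exact_mod_cast (by omega : 2 ≤ n)
    have hR10 : (n : ℤ) ∈ R 1 0 := (R10_iff n hn).mpr (by rw [← hu_def]; exact hA)
    have hw1 : 1 ≤ wa n := by
      have : (1 : ℝ) ≤ (wa n : ℝ) := by rw [hwan]; nlinarith
      exact_mod_cast this
    have hj1 : jmap n = wa n - 1 := by simp only [jmap, if_pos hR10]
    set m1 := wa n - 1 with hm1_def
    have hm1r : (m1 : ℝ) = (n : ℝ) * phi - u - 1 := by
      rw [hm1_def, Nat.cast_sub hw1, hwan]; push_cast; ring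
    have hm1pos : 0 < m1 := by
      have : (0 : ℝ) < (m1 : ℝ) := by rw [hm1r]; nlinarith
      exact_mod_cast this
    have hfr1 : Int.fract ((m1 : ℝ) * phi) = 2 - phi - u * (phi - 1) := by
      apply fract_rep ((wa n : ℤ) + (n : ℤ) - 2) (by nlinarith) (by nlinarith)
      push_cast
      rw [hm1r, hwan]
      linear_combination (n : ℝ) * hsq
    have hm1nA : m1 ∉ WA := by
      intro hmem
      have := (memWA_iff m1 hm1pos).mp hmem
      rw [hfr1] at this; nlinarith
    have hf1 : f m1 = n - 1 := by
      have hval : ((f m1 : ℕ) : ℝ) = (n : ℝ) - 1 := by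
        simp only [f, if_neg hm1nA]
        rw [fb_cast m1, hfr1, hm1r]
        linear_combination (n : ℝ) * hsq
      have h2 : ((n - 1 : ℕ) : ℝ) = (n : ℝ) - 1 := by
        rw [Nat.cast_sub hn]; norm_num
      exact_mod_cast hval.trans h2.symm
    have hm2pos : 0 < n - 1 := by omega
    have hm2r : ((n - 1 : ℕ) : ℝ) = (n : ℝ) - 1 := by
      rw [Nat.cast_sub hn]; norm_num
    have hfr2 : Int.fract (((n - 1 : ℕ) : ℝ) * phi) = u + 2 - phi := by
      apply fract_rep ((wa n : ℤ) - 2) (by linarith) (by linarith)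
      rw [hm2r]
      push_cast
      rw [hwan]
      ring
    have hnR10' : (((n - 1 : ℕ) : ℕ) : ℤ) ∉ R 1 0 := by
      intro hmem
      have := (R10_iff _ hm2pos).mp hmem
      rw [hfr2] at this; linarith
    have hnR11' : (((n - 1 : ℕ) : ℕ) : ℤ) ∈ R 1 1 := by
      rw [R11_iff]
      have he : (((n - 1 : ℕ) : ℝ) + 1) = (n : ℝ) := by rw [hm2r]; ring
      rw [he, ← hu_def]
      exact hA
    have hj2 : jmap (n - 1) = ⌊(phi - 1) * ((n - 1 : ℕ) : ℝ)⌋₊ + 1 := by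
      simp only [jmap, if_neg hnR10', if_pos hnR11']
    have hj2r : ((jmap (n - 1) : ℕ) : ℝ) = (n : ℝ) * phi - n - u := by
      rw [hj2, Nat.cast_add, Nat.cast_one, fb_cast (n - 1), hfr2, hm2r]
      ring
    have hnA : n ∉ WA := by
      intro hmem
      have := (memWA_iff n hn).mp hmem
      rw [← hu_def] at this; linarith
    have hfnr : ((f n : ℕ) : ℝ) = (n : ℝ) * phi - n - u := by
      simp only [f, if_neg hnA]
      rw [fb_cast n, ← hu_def]
    have hgoal : jmap (f (jmap n)) = jmap (n - 1) := by rw [hj1, hf1]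
    rw [hgoal]
    exact_mod_cast hj2r.trans hfnr.symm
  · rcases lt_or_gt_of_ne hne2 with hB | hB
    · -- Case 2 : 2 - phi < u < 4 - 2*phi
      have hnR10 : (n : ℤ) ∉ R 1 0 := by
        intro hmem
        have := (R10_iff n hn).mp hmem
        rw [← hu_def] at this; linarith
      have hfrn1 : Int.fract (((n : ℝ) + 1) * phi) = u + phi - 2 := by
        apply fract_rep ((wa n : ℤ) + 2) (by linarith) (by linarith)
        push_cast
        rw [hwan]
        ring
      have hnR11 : (n : ℤ) ∈ R 1 1 := (R11_iff n).mpr (by rw [hfrn1]; linarith)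
      have hj1 : jmap n = ⌊(phi - 1) * (n : ℝ)⌋₊ + 1 := by
        simp only [jmap, if_neg hnR10, if_pos hnR11]
      set m1 := ⌊(phi - 1) * (n : ℝ)⌋₊ + 1 with hm1_def
      have hm1r : (m1 : ℝ) = (n : ℝ) * phi - n - u + 1 := by
        rw [hm1_def, Nat.cast_add, Nat.cast_one, fb_cast n, ← hu_def]
      have hm1pos : 0 < m1 := by omega
      have hfr1 : Int.fract ((m1 : ℝ) * phi) = phi - u * phi := by
        apply fract_rep (n : ℤ) (by nlinarith) (by nlinarith)
        rw [hm1r]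
        push_cast
        linear_combination (n : ℝ) * hsq
      have hm1A : m1 ∈ WA := (memWA_iff m1 hm1pos).mpr (by rw [hfr1]; nlinarith)
      have hwa_m1 : (wa m1 : ℝ) = (m1 : ℝ) * phi - (phi - u * phi) := by
        rw [wa_cast m1, hfr1]
      have hf1 : f m1 = n + 1 := by
        have hval : ((f m1 : ℕ) : ℝ) = ((n + 1 : ℕ) : ℝ) := by
          simp only [f, if_pos hm1A]
          push_cast
          rw [hwa_m1, hm1r]
          linear_combination (n : ℝ) * hsq
        exact_mod_cast hval
      have hfrn1' : Int.fract (((n + 1 : ℕ) : ℝ) * phi) = u + phi - 2 := by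
        have he : ((n + 1 : ℕ) : ℝ) = (n : ℝ) + 1 := by push_cast; ring
        rw [he]; exact hfrn1
      have hR10' : ((n + 1 : ℕ) : ℤ) ∈ R 1 0 := by
        apply (R10_iff (n + 1) (by omega)).mpr
        rw [hfrn1']; linarith
      have hwan1 : (wa (n + 1) : ℝ) = ((n + 1 : ℕ) : ℝ) * phi - (u + phi - 2) := by
        rw [wa_cast (n + 1), hfrn1']
      have hw1' : 1 ≤ wa (n + 1) := by
        have : (1 : ℝ) ≤ (wa (n + 1) : ℝ) := by
          rw [hwan1]; push_cast; nlinarith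
        exact_mod_cast this
      have hj2 : jmap (n + 1) = wa (n + 1) - 1 := by simp only [jmap, if_pos hR10']
      have hj2r : ((wa (n + 1) - 1 : ℕ) : ℝ) = (n : ℝ) * phi - u + 1 := by
        rw [Nat.cast_sub hw1', hwan1]; push_cast; ring
      have hnA : n ∈ WA := (memWA_iff n hn).mpr (by rw [← hu_def]; linarith)
      have hfnr : ((f n : ℕ) : ℝ) = (n : ℝ) * phi - u + 1 := by
        simp only [f, if_pos hnA]
        push_cast
        rw [hwan]
      rw [hj1, hf1, hj2]
      exact_mod_cast hj2r.trans hfnr.symm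
    · -- Case 3 : u > 4 - 2*phi
      have hA' : 2 - phi < u := by linarith
      have hnR10 : (n : ℤ) ∉ R 1 0 := by
        intro hmem
        have := (R10_iff n hn).mp hmem
        rw [← hu_def] at this; linarith
      have hfrn1 : Int.fract (((n : ℝ) + 1) * phi) = u + phi - 2 := by
        apply fract_rep ((wa n : ℤ) + 2) (by linarith) (by linarith)
        push_cast
        rw [hwan]
        ring
      have hnR11 : (n : ℤ) ∉ R 1 1 := by
        intro hmem
        have := (R11_iff n).mp hmem
        rw [hfrn1] at this; linarith
      have hj1 : jmap n = wa n + 1 := by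
        simp only [jmap, if_neg hnR10, if_neg hnR11]
      set m1 := wa n + 1 with hm1_def
      have hm1r : (m1 : ℝ) = (n : ℝ) * phi - u + 1 := by
        rw [hm1_def]; push_cast; rw [hwan]
      have hm1pos : 0 < m1 := by omega
      have hfr1 : Int.fract ((m1 : ℝ) * phi) = u - u * phi + phi - 1 := by
        apply fract_rep ((wa n : ℤ) + (n : ℤ) + 1) (by nlinarith) (by nlinarith)
        rw [hm1r]
        push_cast
        rw [hwan]
        linear_combination (n : ℝ) * hsq
      have hm1nA : m1 ∉ WA := by
        intro hmem
        have := (memWA_iff m1 hm1pos).mp hmem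
        rw [hfr1] at this; nlinarith
      have hf1 : f m1 = n := by
        have hval : ((f m1 : ℕ) : ℝ) = (n : ℝ) := by
          simp only [f, if_neg hm1nA]
          rw [fb_cast m1, hfr1, hm1r]
          linear_combination (n : ℝ) * hsq
        exact_mod_cast hval
      have hnA : n ∈ WA := (memWA_iff n hn).mpr (by rw [← hu_def]; linarith)
      have hfnr : ((f n : ℕ) : ℝ) = (n : ℝ) * phi - u + 1 := by
        simp only [f, if_pos hnA]
        push_cast
        rw [hwan]
      rw [hj1, hf1, hj1]
      exact_mod_cast hm1r.trans hfnr.symm
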